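/- For every n ≥ 1, the number of periodic strings in A(n) is at most the number of aperiodic strings in A(n). -/

import Mathlib

/-- Concatenation of `t` copies of `γ`. -/
def listPow (γ : List Bool) (t : ℕ) : List Bool := (List.replicate t γ).flatten

/-- A string is a necklace if it is lexicographically minimal among its rotations. -/
def IsNecklace (α : List Bool) : Prop := ∀ k : ℕ, α ≤ α.rotate k

/-- A necklace is symmetric if its reversal is one of its rotations. -/
def IsSymmetric (α : List Bool) : Prop := List.IsRotated α.reverse α

/-- A string is an asymmetric bracelet if it is a necklace that is lexicographically
strictly smaller than every rotation of its reversal. -/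
def IsAsymBracelet (α : List Bool) : Prop :=
  IsNecklace α ∧ ∀ k : ℕ, α < α.reverse.rotate k

/-- `A n`: the set of asymmetric bracelets of length `n`. -/
def A (n : ℕ) : Set (List Bool) := {α | α.length = n ∧ IsAsymBracelet α}

/-- `S n`: all length-`n` strings that are rotations of some asymmetric bracelet. -/
def S (n : ℕ) : Set (List Bool) := {β | ∃ α ∈ A n, List.IsRotated α β}

/-- A string is periodic if it is `γ^j` for some string `γ` and some `j ≥ 2`. -/
def IsPeriodic (α : List Bool) : Prop := ∃ γ : List Bool, ∃ j : ℕ, 2 ≤ j ∧ listPow γ j = α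

/-- `ap α`: the aperiodic prefix, i.e. the shortest `γ` with `α = γ^t`. -/
noncomputable def ap (α : List Bool) : List Bool :=
  α.take (sInf {p | ∃ γ : List Bool, γ.length = p ∧ ∃ t : ℕ, listPow γ t = α})

/-- Flip the first occurrence of the bit `b`. -/
def flipFirst (b : Bool) : List Bool → List Bool
  | [] => []
  | a :: rest => if a = b then (!b) :: rest else a :: flipFirst b rest

/-- Flip the first `1` to a `0`. -/
def firstone (α : List Bool) : List Bool := flipFirst true α

/-- Flip the last `0` to a `1`. -/
def lastzero (α : List Bool) : List Bool := (flipFirst false α.reverse).reverse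

/-- The lexicographically least rotation of `α`. -/
noncomputable def neckOf (α : List Bool) : List Bool :=
  ((List.range (α.length + 1)).map α.rotate).foldr min α

/-- Flip the last bit (a `1`) to `0` and take the lexicographically least rotation. -/
noncomputable def lastone (α : List Bool) : List Bool := neckOf (α.dropLast ++ [false])

/-- Flip the first bit (a `0`) to `1` and take the lexicographically least rotation. -/
noncomputable def firstzero (α : List Bool) : List Bool := neckOf (true :: α.tail)

/-- The root `0^{n-4}1011`. -/
def rootStr (n : ℕ) : List Bool := List.replicate (n - 4) false ++ [true, false, true, true]

open Classical in
/-- The parent rule. -/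
noncomputable def parentStr (n : ℕ) (α : List Bool) : List Bool :=
  if firstone α ∈ A n then firstone α
  else if lastone α ∈ A n then lastone α
  else lastzero α

/-- Cyclic window of length `n` of `o` starting at position `i` (0-indexed). -/
def cycWin (o : List Bool) (n i : ℕ) : List Bool :=
  (List.range n).map fun k => o.getD ((i + k) % o.length) false

/-- `o` is an orientable sequence of order `n`: its forward cyclic windows of length `n`
together with their reversals are `2·|o|` pairwise distinct strings. -/
def IsOS (n : ℕ) (o : List Bool) : Prop :=
  ∀ i < o.length, ∀ j < o.length,
    (cycWin o n i = cycWin o n j → i = j) ∧ cycWin o n i ≠ (cycWin o n j).reverse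

open Classical in
/-- The successor rule `g`. -/
noncomputable def succRule (α : List Bool) : Bool :=
  let n := α.length
  let i := n - α.reverse.idxOf true
  let j := α.tail.idxOf false + 2
  let β₁ := List.replicate (n - i) false ++ true :: α.tail.take (i - 1)
  let β₂ := α.tail ++ [true]
  let β₃ := α.drop (j - 1) ++ false :: List.replicate (j - 2) true
  if (β₁ ∈ A n ∧ firstone β₁ ∈ A n)
      ∨ (β₂ ∈ A n ∧ lastone β₂ ∈ A n ∧ firstone β₂ ∉ A n)
      ∨ (β₃ ∈ A n ∧ lastzero β₃ ∈ A n ∧ firstone β₃ ∉ A n ∧ lastone β₃ ∉ A n)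
  then !α.headD false else α.headD false

/-- The shift map `σ(a₁a₂⋯a_n) = a₂⋯a_n·g(a₁a₂⋯a_n)`. -/
noncomputable def sigmaMap (α : List Bool) : List Bool := α.tail ++ [succRule α]
section AuxLemmas

open List

lemma lex_cons_lt {a : Bool} {u v : List Bool} (h : u < v) : a :: u < a :: v :=
  List.Lex.cons h

lemma lex_append_left (p : List Bool) {u v : List Bool} (h : u < v) :
    p ++ u < p ++ v := by
  induction p with
  | nil => exact h
  | cons a p ih => exact lex_cons_lt ih

lemma lex_replicate_lt {m m' : ℕ} (h : m < m') (u v : List Bool) :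
    List.replicate m' false ++ true :: v < List.replicate m false ++ true :: u := by
  induction m generalizing m' with
  | zero =>
    obtain ⟨k, rfl⟩ : ∃ k, m' = k + 1 := ⟨m' - 1, by omega⟩
    rw [List.replicate_succ]
    exact List.Lex.rel (by decide)
  | succ m ih =>
    obtain ⟨k, rfl⟩ : ∃ k, m' = k + 1 := ⟨m' - 1, by omega⟩
    rw [List.replicate_succ, List.replicate_succ]
    exact lex_cons_lt (ih (by omega))

lemma lex_append_of_lt {u v : List Bool} (x y : List Bool)
    (hlen : u.length = v.length) (h : u < v) : u ++ x < v ++ y := by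
  induction u generalizing v with
  | nil =>
    have hv : v = [] := by
      have := hlen.symm
      simpa [List.length_eq_zero_iff] using this
    subst hv; cases h
  | cons a u ih =>
    cases v with
    | nil => simp at hlen
    | cons b v =>
      cases h with
      | rel hr => exact List.Lex.rel hr
      | cons h' => exact lex_cons_lt (ih (by simpa using hlen) h')

lemma listPow_zero (γ : List Bool) : listPow γ 0 = [] := rfl

lemma listPow_succ (γ : List Bool) (t : ℕ) : listPow γ (t + 1) = γ ++ listPow γ t := by
  simp [listPow, List.replicate_succ]

lemma listPow_succ' (γ : List Bool) (t : ℕ) : listPow γ (t + 1) = listPow γ t ++ γ := by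
  simp [listPow, List.replicate_succ']

lemma listPow_length (γ : List Bool) (t : ℕ) : (listPow γ t).length = t * γ.length := by
  induction t with
  | zero => simp [listPow]
  | succ t ih => rw [listPow_succ, List.length_append, ih]; ring

lemma reverse_listPow (γ : List Bool) (t : ℕ) :
    (listPow γ t).reverse = listPow γ.reverse t := by
  induction t with
  | zero => rfl
  | succ t ih => rw [listPow_succ, List.reverse_append, ih, ← listPow_succ']

lemma listPow_shift (u v : List Bool) (t : ℕ) :
    listPow (u ++ v) (t + 1) = u ++ (listPow (v ++ u) t ++ v) := by
  induction t with
  | zero => simp [listPow_succ, listPow_zero]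
  | succ t ih =>
    rw [listPow_succ (u ++ v), ih, listPow_succ (v ++ u)]
    simp [List.append_assoc]

lemma drop_append_left {u v : List Bool} {k : ℕ} (h : u.length = k) : (u ++ v).drop k = v := by
  subst h
  simpa using List.drop_append (l₁ := u) (l₂ := v) 0

lemma take_append_left {u v : List Bool} {k : ℕ} (h : u.length = k) : (u ++ v).take k = u :=
  List.take_left' h

lemma drop_append_off {u v : List Bool} {k : ℕ} (h : u.length ≤ k) :
    (u ++ v).drop k = v.drop (k - u.length) := by
  obtain ⟨i, rfl⟩ : ∃ i, k = u.length + i := ⟨k - u.length, by omega⟩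
  rw [List.drop_length_add_append]
  congr 1
  omega

lemma take_append_off {u v : List Bool} {k : ℕ} (h : u.length ≤ k) :
    (u ++ v).take k = u ++ v.take (k - u.length) := by
  obtain ⟨i, rfl⟩ : ∃ i, k = u.length + i := ⟨k - u.length, by omega⟩
  rw [List.take_length_add_append]
  congr 2
  omega

lemma rotate_listPow (x : List Bool) {k t : ℕ} (hk : k ≤ x.length) (ht : 1 ≤ t) :
    (listPow x t).rotate k = listPow (x.rotate k) t := by
  obtain ⟨s, rfl⟩ : ∃ s, t = s + 1 := ⟨t - 1, by omega⟩
  have hlt : (x.take k).length = k := by rw [List.length_take]; omega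
  have h1 : listPow x (s + 1) =
      x.take k ++ (listPow (x.drop k ++ x.take k) s ++ x.drop k) := by
    conv_lhs => rw [← List.take_append_drop k x]
    exact listPow_shift _ _ s
  have hk' : k ≤ (listPow x (s + 1)).length := by
    rw [listPow_length]
    calc k ≤ x.length := hk
    _ ≤ (s + 1) * x.length := Nat.le_mul_of_pos_left _ (by omega)
  rw [List.rotate_eq_drop_append_take hk', h1, drop_append_left hlt, take_append_left hlt,
    List.rotate_eq_drop_append_take hk, listPow_succ' (x.drop k ++ x.take k)]
  simp [List.append_assoc]

lemma decomp_true {u : List Bool} (h : true ∈ u) :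
    ∃ s w, u = List.replicate s false ++ true :: w ∧ s + (w.length + 1) = u.length := by
  induction u with
  | nil => simp at h
  | cons a u ih =>
    cases a with
    | true => exact ⟨0, u, rfl, by simp⟩
    | false =>
      have h' : true ∈ u := by simpa using h
      obtain ⟨s, w, h1, h2⟩ := ih h'
      refine ⟨s + 1, w, ?_, ?_⟩
      · rw [List.replicate_succ, h1]; rfl
      · simp only [List.length_cons]; omega

lemma eq_replicate_of_not_mem {u : List Bool} (h : true ∉ u) :
    u = List.replicate u.length false := by
  rw [List.eq_replicate_length]
  intro b hb
  cases b with
  | false => rfl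
  | true => exact absurd hb h

lemma replicate_true_inj {m m' : ℕ} {u v : List Bool}
    (h : List.replicate m false ++ true :: u = List.replicate m' false ++ true :: v) :
    m = m' ∧ u = v := by
  induction m generalizing m' with
  | zero =>
    cases m' with
    | zero => simpa using h
    | succ m' => rw [List.replicate_succ] at h; simp at h
  | succ m ih =>
    cases m' with
    | zero => rw [List.replicate_succ] at h; simp at h
    | succ m' =>
      rw [List.replicate_succ, List.replicate_succ] at h
      simp only [List.cons_append, List.cons.injEq, true_and] at h
      obtain ⟨h1, h2⟩ := ih h
      exact ⟨by omega, h2⟩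

end AuxLemmas
section MainConstruct

lemma main_construct {n d t : ℕ} {γ ζ : List Bool}
    (hd : γ.length = d) (hζ : γ = ζ ++ [true])
    (hne : γ ≠ List.replicate (d - 1) false ++ [true])
    (hasym1 : γ < γ.reverse.rotate 1)
    (ht : 2 ≤ t) (hdt : d * t = n) :
    (List.replicate (n - d - 1) false ++ true :: γ) ∈ A n ∧
      ¬ IsPeriodic (List.replicate (n - d - 1) false ++ true :: γ) := by
  have hζlen : ζ.length + 1 = d := by rw [← hd, hζ]; simp
  have hd1 : 1 ≤ d := by omega
  have hd2 : 2 ≤ d := by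
    by_contra h
    have hζ0 : ζ = [] := by
      have : ζ.length = 0 := by omega
      exact List.length_eq_zero_iff.mp this
    apply hne
    rw [hζ, hζ0]
    have : d - 1 = 0 := by omega
    rw [this]
    rfl
  have hn2d : 2 * d ≤ n := by
    have : d * 2 ≤ d * t := Nat.mul_le_mul_left d ht
    omega
  set m : ℕ := n - d - 1 with hm
  have hm1 : 1 ≤ m := by omega
  have hdm : d - 2 < m := by omega
  have hmn : m + 1 + d = n := by omega
  set β : List Bool := List.replicate m false ++ true :: γ with hβ
  have hβlen : β.length = n := by
    rw [hβ]
    simp only [List.length_append, List.length_replicate, List.length_cons, hd]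
    omega
  -- decomposition of γ
  have hmemγ : true ∈ γ := by rw [hζ]; simp
  obtain ⟨s₀, w₀, hγ0, hγ0len⟩ := decomp_true hmemγ
  rw [hd] at hγ0len
  have hs₀ : s₀ < m := by
    rcases Nat.lt_or_ge s₀ (d - 1) with h | h
    · omega
    · exfalso
      apply hne
      have hw0 : w₀ = [] := by
        have : w₀.length = 0 := by omega
        exact List.length_eq_zero_iff.mp this
      have hs0e : s₀ = d - 1 := by omega
      rw [hγ0, hw0, hs0e]
  -- P1 : form of rotations of β
  have P1 : ∀ k, 1 ≤ k → k < n →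
      ∃ s w, s < m ∧ β.rotate k = List.replicate s false ++ true :: w := by
    intro k hk1 hkn
    rw [List.rotate_eq_drop_append_take (by rw [hβlen]; omega)]
    rcases le_or_gt k m with hkm | hkm
    · refine ⟨m - k, γ ++ List.replicate k false, by omega, ?_⟩
      have hdrop : β.drop k = List.replicate (m - k) false ++ true :: γ := by
        rw [hβ, List.drop_append_of_le_length (by simp; omega), List.drop_replicate]
      have htake : β.take k = List.replicate k false := by
        rw [hβ, List.take_append_of_le_length (by simp; omega), List.take_replicate]
        congr 1
        omega
      rw [hdrop, htake]
      simp
    · obtain ⟨i, rfl⟩ : ∃ i, k = (m + 1) + i := ⟨k - (m + 1), by omega⟩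
      have hid : i < d := by omega
      have hβeq : β = (List.replicate m false ++ [true]) ++ γ := by rw [hβ]; simp
      have hlen1 : (List.replicate m false ++ [true]).length = m + 1 := by simp
      have hdrop : β.drop (m + 1 + i) = γ.drop i := by
        rw [hβeq, drop_append_off (by rw [hlen1]; omega)]
        congr 1
        rw [hlen1]
        omega
      have htake : β.take (m + 1 + i) = (List.replicate m false ++ [true]) ++ γ.take i := by
        rw [hβeq, take_append_off (by rw [hlen1]; omega)]
        congr 2
        rw [hlen1]
        omega
      rw [hdrop, htake]
      rcases Nat.eq_zero_or_pos i with hi0 | hi1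
      · subst hi0
        refine ⟨s₀, w₀ ++ ((List.replicate m false ++ [true]) ++ γ.take 0), hs₀, ?_⟩
        rw [List.drop_zero]
        conv_lhs => rw [hγ0]
        simp
      · have hmem : true ∈ γ.drop i := by
          rw [hζ, List.drop_append_of_le_length (by omega)]
          simp
        obtain ⟨s, w, he, hl⟩ := decomp_true hmem
        have hldrop : (γ.drop i).length = d - i := by rw [List.length_drop, hd]
        rw [hldrop] at hl
        refine ⟨s, w ++ ((List.replicate m false ++ [true]) ++ γ.take i), by omega, ?_⟩
        conv_lhs => rw [he]
        simp
  -- reverse of β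
  have hβrev : β.reverse = (γ.reverse ++ [true]) ++ List.replicate m false := by
    rw [hβ]
    simp
  have hγrev : γ.reverse = true :: ζ.reverse := by rw [hζ]; simp
  have hγrevlen : γ.reverse.length = d := by simp [hd]
  have hrevlen1 : (γ.reverse ++ [true]).length = d + 1 := by simp [hd]
  -- the aligned comparison
  have hasym1' : γ < ζ.reverse ++ [true] := by
    have hrot1 : γ.reverse.rotate 1 = ζ.reverse ++ [true] := by
      rw [List.rotate_eq_drop_append_take (by rw [hγrevlen]; omega), hγrev]
      simp
    rw [hrot1] at hasym1
    exact hasym1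
  have P3 : β < β.reverse.rotate (d + 1) := by
    have hrot : β.reverse.rotate (d + 1) =
        List.replicate m false ++ true :: (ζ.reverse ++ [true]) := by
      rw [List.rotate_eq_drop_append_take (by rw [List.length_reverse, hβlen]; omega), hβrev,
        drop_append_left hrevlen1, take_append_left hrevlen1, hγrev]
      rfl
    rw [hrot, hβ]
    exact lex_append_left _ (lex_cons_lt hasym1')
  have P2 : ∀ k, k < n → k ≠ d + 1 →
      ∃ s w, s < m ∧ β.reverse.rotate k = List.replicate s false ++ true :: w := by
    intro k hkn hknot
    rcases Nat.eq_zero_or_pos k with rfl | hk1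
    · refine ⟨0, ζ.reverse ++ [true] ++ List.replicate m false, hm1, ?_⟩
      rw [List.rotate_zero, hβrev, hγrev]
      simp
    rw [List.rotate_eq_drop_append_take (by rw [List.length_reverse, hβlen]; omega), hβrev]
    rcases le_or_gt k d with hkd | hkd
    · -- 1 ≤ k ≤ d
      have hdrop : ((γ.reverse ++ [true]) ++ List.replicate m false).drop k =
          (γ.reverse.drop k ++ [true]) ++ List.replicate m false := by
        rw [List.drop_append_of_le_length (by rw [hrevlen1]; omega),
          List.drop_append_of_le_length (by rw [hγrevlen]; omega)]
      have htake : ((γ.reverse ++ [true]) ++ List.replicate m false).take k =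
          γ.reverse.take k := by
        rw [List.take_append_of_le_length (by rw [hrevlen1]; omega),
          List.take_append_of_le_length (by rw [hγrevlen]; omega)]
      rw [hdrop, htake]
      have hulen : (γ.reverse.drop k).length = d - k := by
        rw [List.length_drop, hγrevlen]
      by_cases hmem : true ∈ γ.reverse.drop k
      · obtain ⟨s, w, he, hl⟩ := decomp_true hmem
        rw [hulen] at hl
        refine ⟨s, w ++ [true] ++ List.replicate m false ++ γ.reverse.take k, by omega, ?_⟩
        rw [he]
        simp
      · -- all-false suffix
        have hk2 : 2 ≤ k := by
          rcases Nat.lt_or_ge k 2 with hklt | hge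
          swap
          · exact hge
          exfalso
          have hk1' : k = 1 := by omega
          subst hk1'
          apply hne
          have hu : γ.reverse.drop 1 = List.replicate (d - 1) false := by
            have h2 := eq_replicate_of_not_mem hmem
            rw [hulen] at h2
            exact h2
          rw [hγrev] at hu
          simp only [List.drop_one, List.tail_cons] at hu
          have : ζ = List.replicate (d - 1) false := by
            have := congrArg List.reverse hu
            simpa using this
          rw [hζ, this]
        have hu : γ.reverse.drop k = List.replicate (d - k) false := by
          have := eq_replicate_of_not_mem hmem
          rw [hulen] at this
          exact this
        refine ⟨d - k, List.replicate m false ++ γ.reverse.take k, by omega, ?_⟩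
        rw [hu]
        simp
    · -- d + 2 ≤ k < n
      have hk2 : d + 2 ≤ k := by omega
      have hdrop : ((γ.reverse ++ [true]) ++ List.replicate m false).drop k =
          List.replicate (m - (k - (d + 1))) false := by
        rw [drop_append_off (by rw [hrevlen1]; omega), List.drop_replicate, hrevlen1]
      have htake : ((γ.reverse ++ [true]) ++ List.replicate m false).take k =
          (γ.reverse ++ [true]) ++ List.replicate (k - (d + 1)) false := by
        rw [take_append_off (by rw [hrevlen1]; omega), List.take_replicate, hrevlen1]
        congr 2
        omega
      rw [hdrop, htake, hγrev]
      refine ⟨m - (k - (d + 1)), ζ.reverse ++ [true] ++ List.replicate (k - (d + 1)) false,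
        by omega, ?_⟩
      simp
  -- necklace
  have hneck : IsNecklace β := by
    intro k
    rw [← List.rotate_mod]
    rcases Nat.eq_zero_or_pos (k % β.length) with h0 | hpos
    · rw [h0, List.rotate_zero]
    · have hlt : k % β.length < n := by
        rw [hβlen] at *
        exact Nat.mod_lt _ (by omega)
      obtain ⟨s, w, hs, heq⟩ := P1 _ hpos hlt
      rw [heq]
      exact le_of_lt (lex_replicate_lt hs w γ)
  -- asymmetry
  have hasymβ : ∀ k, β < β.reverse.rotate k := by
    intro k
    rw [← List.rotate_mod]
    have hrl : β.reverse.length = n := by rw [List.length_reverse, hβlen]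
    have hk'n : k % β.reverse.length < n := by
      rw [hrl]
      exact Nat.mod_lt _ (by omega)
    by_cases hd1' : k % β.reverse.length = d + 1
    · rw [hd1']
      exact P3
    · obtain ⟨s, w, hs, heq⟩ := P2 _ hk'n hd1'
      rw [heq]
      exact lex_replicate_lt hs w γ
  -- not periodic
  have hnper : ¬ IsPeriodic β := by
    rintro ⟨μ, j, hj, hμ⟩
    have hlenμ : j * μ.length = n := by rw [← hβlen, ← hμ, listPow_length]
    have hμ1 : 1 ≤ μ.length := by
      rcases Nat.eq_zero_or_pos μ.length with h | h
      · rw [h] at hlenμ; omega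
      · exact h
    have hμn : μ.length < n := by
      have : 2 * μ.length ≤ j * μ.length := Nat.mul_le_mul_right _ hj
      omega
    have hrot : β.rotate μ.length = β := by
      rw [← hμ, rotate_listPow μ (le_refl _) (by omega), List.rotate_length]
    obtain ⟨s, w, hs, heq⟩ := P1 μ.length hμ1 hμn
    rw [hrot] at heq
    have hcontr := lex_replicate_lt hs w γ
    rw [← heq, ← hβ] at hcontr
    exact lt_irrefl _ hcontr
  exact ⟨⟨hβlen, hneck, hasymβ⟩, hnper⟩

end MainConstruct
section KeyFacts

lemma ap_def (α : List Bool) :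
    ap α = α.take (sInf {p | ∃ γ : List Bool, γ.length = p ∧ ∃ t : ℕ, listPow γ t = α}) := rfl

lemma A_concat_true {n : ℕ} (hn : 1 ≤ n) {α : List Bool} (hA : α ∈ A n) :
    ∃ ζ, α = ζ ++ [true] := by
  obtain ⟨hlen, hneck, hasym⟩ := hA
  rcases List.eq_nil_or_concat α with h | ⟨ζ, b, hb⟩
  · rw [h] at hlen
    simp at hlen
    omega
  rw [List.concat_eq_append] at hb
  cases b with
  | true => exact ⟨ζ, hb⟩
  | false =>
    exfalso
    have hζlen : ζ.length = n - 1 := by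
      have := congrArg List.length hb
      rw [hlen] at this
      simp at this
      omega
    have hmem : true ∈ α := by
      by_contra hmem
      have hαrep : α = List.replicate α.length false := eq_replicate_of_not_mem hmem
      have h0 := hasym 0
      rw [List.rotate_zero, hαrep, List.reverse_replicate] at h0
      exact lt_irrefl _ h0
    obtain ⟨s, w, hdec, hdlen⟩ := decomp_true hmem
    rcases List.eq_nil_or_concat w with hw | ⟨w', b', hw⟩
    · rw [hw] at hdec
      have h1 : α.getLast? = some false := by rw [hb]; exact List.getLast?_concat
      have h2 : α.getLast? = some true := by rw [hdec]; exact List.getLast?_concat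
      rw [h1] at h2
      simp at h2
    · rw [List.concat_eq_append] at hw
      rw [hw] at hdec
      have hα2 : α = (List.replicate s false ++ true :: w') ++ [b'] := by rw [hdec]; simp
      have hb' : b' = false := by
        have h1 : α.getLast? = some false := by rw [hb]; exact List.getLast?_concat
        have h2 : α.getLast? = some b' := by rw [hα2]; exact List.getLast?_concat
        rw [h1] at h2
        exact (Option.some.inj h2).symm
      rw [hb'] at hα2
      have hζeq : ζ = List.replicate s false ++ true :: w' := by
        apply List.append_cancel_right (bs := [false])
        rw [← hb, hα2]
      have hrot : α.rotate (n - 1) = false :: ζ := by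
        rw [List.rotate_eq_drop_append_take (by rw [hlen]; omega), hb,
          drop_append_left hζlen, take_append_left hζlen]
        rfl
      have hlt : α.rotate (n - 1) < α := by
        rw [hrot, hζeq]
        conv_rhs => rw [hdec]
        have hcons : (false :: (List.replicate s false ++ true :: w') : List Bool) =
            List.replicate (s + 1) false ++ true :: w' := by
          rw [List.replicate_succ]
          rfl
        rw [hcons, hb']
        exact lex_replicate_lt (Nat.lt_succ_self s) (w' ++ [false]) w'
      exact absurd (hneck (n - 1)) (not_le_of_gt hlt)

lemma key_facts {n : ℕ} (hn : 1 ≤ n) {α : List Bool} (hA : α ∈ A n) (hper : IsPeriodic α) :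
    ∃ t, 2 ≤ t ∧ (ap α).length * t = n ∧ listPow (ap α) t = α ∧
      (∃ ζ, ap α = ζ ++ [true]) ∧
      ap α ≠ List.replicate ((ap α).length - 1) false ++ [true] ∧
      ap α < (ap α).reverse.rotate 1 := by
  obtain ⟨hlen, hneck, hasym⟩ := hA
  have hSne : {p | ∃ γ : List Bool, γ.length = p ∧ ∃ t : ℕ, listPow γ t = α}.Nonempty :=
    ⟨α.length, α, rfl, 1, by simp [listPow]⟩
  obtain ⟨γ₀, hγ₀len, t₀, hpow₀⟩ := Nat.sInf_mem hSne
  obtain ⟨γp, jp, hjp, hpp⟩ := hper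
  have hle : sInf {p | ∃ γ : List Bool, γ.length = p ∧ ∃ t : ℕ, listPow γ t = α} ≤ γp.length :=
    Nat.sInf_le ⟨γp, rfl, jp, hpp⟩
  have hγplen : jp * γp.length = n := by rw [← hlen, ← hpp, listPow_length]
  have hlen₀ : t₀ * γ₀.length = n := by rw [← hlen, ← hpow₀, listPow_length]
  have h2γp : 2 * γp.length ≤ n := by
    have := Nat.mul_le_mul_right γp.length hjp
    omega
  have hd0pos : 1 ≤ γ₀.length := by
    rcases Nat.eq_zero_or_pos γ₀.length with h | h
    · rw [h] at hlen₀; omega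
    · exact h
  have h2d0 : 2 * γ₀.length ≤ n := by rw [hγ₀len]; omega
  have ht₀2 : 2 ≤ t₀ := by
    rcases Nat.lt_or_ge t₀ 2 with h | h
    · exfalso
      have h3 : t₀ * γ₀.length ≤ 1 * γ₀.length := Nat.mul_le_mul_right γ₀.length (by omega)
      have h4 : n ≤ γ₀.length := by rw [← hlen₀]; simpa using h3
      omega
    · exact h
  have ht₀1 : 1 ≤ t₀ := by omega
  have hα0 : γ₀ ++ listPow γ₀ (t₀ - 1) = α := by
    rw [← listPow_succ]
    have : t₀ - 1 + 1 = t₀ := by omega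
    rw [this]
    exact hpow₀
  have hap : ap α = γ₀ := by
    rw [ap_def]
    have h1 := take_append_left (v := listPow γ₀ (t₀ - 1)) hγ₀len
    rw [hα0] at h1
    exact h1
  rw [hap]
  have hpow : listPow γ₀ t₀ = α := hpow₀
  -- last char of γ₀ is true
  have hγ₀ne : γ₀ ≠ [] := by
    intro h
    rw [h] at hd0pos
    simp at hd0pos
  obtain ⟨ζ, b, hb⟩ := (List.eq_nil_or_concat γ₀).resolve_left hγ₀ne
  rw [List.concat_eq_append] at hb
  have hbt : b = true := by
    obtain ⟨ζα, hζα⟩ := A_concat_true hn ⟨hlen, hneck, hasym⟩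
    have h1 : α.getLast? = some true := by rw [hζα]; exact List.getLast?_concat
    have h2 : α.getLast? = some b := by
      conv_lhs => rw [← hpow]
      obtain ⟨s, hs⟩ : ∃ s, t₀ = s + 1 := ⟨t₀ - 1, by omega⟩
      rw [hs, listPow_succ', hb, ← List.append_assoc]
      exact List.getLast?_concat
    rw [h1] at h2
    exact (Option.some.inj h2).symm
  rw [hbt] at hb
  -- asymmetry at rotation 1 of the reverse
  have hrevpow : α.reverse = listPow γ₀.reverse t₀ := by rw [← hpow, reverse_listPow]
  have hasymγ : γ₀ < γ₀.reverse.rotate 1 := by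
    have h1 := hasym 1
    rw [hrevpow, rotate_listPow γ₀.reverse (by rw [List.length_reverse]; omega) ht₀1] at h1
    rcases lt_trichotomy γ₀ (γ₀.reverse.rotate 1) with h | h | h
    · exact h
    · exfalso
      rw [← h, hpow] at h1
      exact lt_irrefl _ h1
    · exfalso
      have h2 : listPow (γ₀.reverse.rotate 1) t₀ < listPow γ₀ t₀ := by
        obtain ⟨s, hs⟩ : ∃ s, t₀ = s + 1 := ⟨t₀ - 1, by omega⟩
        rw [hs, listPow_succ, listPow_succ]
        exact lex_append_of_lt _ _ (by simp) h
      rw [hpow] at h2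
      exact lt_asymm h1 h2
  refine ⟨t₀, ht₀2, by rw [Nat.mul_comm]; exact hlen₀, hpow, ⟨ζ, hb⟩, ?_, hasymγ⟩
  -- γ₀ is not 0^(d-1) 1
  intro heq
  have hrot : γ₀.reverse.rotate 1 = γ₀ := by
    have hrev : γ₀.reverse = true :: List.replicate (γ₀.length - 1) false := by
      conv_lhs => rw [heq]
      rw [List.reverse_append, List.reverse_replicate]
      rfl
    rw [hrev, List.rotate_eq_drop_append_take (by simp)]
    rw [show List.drop 1 (true :: List.replicate (γ₀.length - 1) false) =
        List.replicate (γ₀.length - 1) false from rfl,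
      show List.take 1 (true :: List.replicate (γ₀.length - 1) false) = [true] from rfl]
    exact heq.symm
  rw [hrot] at hasymγ
  exact lt_irrefl _ hasymγ

end KeyFacts

/-- For every `n ≥ 1`, the number of periodic strings in `A n` is at most
the number of aperiodic strings in `A n`. -/
theorem periodic_le_aperiodic (n : ℕ) (hn : 1 ≤ n) :
    {α ∈ A n | IsPeriodic α}.ncard ≤ {α ∈ A n | ¬ IsPeriodic α}.ncard := by
  classical
  have hfin : {α ∈ A n | ¬ IsPeriodic α}.Finite :=
    (List.finite_length_eq Bool n).subset (fun α hα => hα.1.1)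
  refine Set.ncard_le_ncard_of_injOn
      (fun α => List.replicate (n - (ap α).length - 1) false ++ true :: ap α) ?_ ?_ hfin
  · rintro α ⟨hA, hper⟩
    obtain ⟨t, ht2, hdt, hpow, ⟨ζ, hζ⟩, hne, hasym1⟩ := key_facts hn hA hper
    obtain ⟨hmem, hnper⟩ := main_construct rfl hζ hne hasym1 ht2 hdt
    exact ⟨hmem, hnper⟩
  · rintro α ⟨hA, hper⟩ α' ⟨hA', hper'⟩ heq
    obtain ⟨t, ht2, hdt, hpow, -, -, -⟩ := key_facts hn hA hper
    obtain ⟨t', ht2', hdt', hpow', -, -, -⟩ := key_facts hn hA' hper'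
    simp only at heq
    obtain ⟨hm, hγ⟩ := replicate_true_inj heq
    have hdpos : 0 < (ap α).length := by
      rcases Nat.eq_zero_or_pos (ap α).length with h | h
      · rw [h, Nat.zero_mul] at hdt
        omega
      · exact h
    have hmul : (ap α).length * t = (ap α).length * t' := by
      rw [hdt, hγ, hdt']
    have htt : t = t' := Nat.eq_of_mul_eq_mul_left hdpos hmul
    rw [← hpow, ← hpow', hγ, htt]
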